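/- A Wardrop equilibrium exists in every nonatomic routing game with a finite, nonempty path set, fixed positive demand, and continuous nondecreasing link cost functions. -/

import Mathlib

open scoped Classical

/-- Existence of Wardrop equilibria: in every nonatomic routing game with a finite,
nonempty path set, fixed positive demand, and continuous nondecreasing link costs,
a Wardrop equilibrium exists. -/
theorem wardrop_equilibrium_exists {A P : Type*} [Fintype A] [Fintype P] [Nonempty P]
    (uses : P → Finset A) (f : A → ℝ → ℝ)
    (hfc : ∀ l, Continuous (f l)) (hfm : ∀ l, Monotone (f l))
    (γ : ℝ) (hγ : 0 < γ)
    (z : (P → ℝ) → A → ℝ)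
    (hz : ∀ q l, z q l = ∑ p ∈ Finset.univ.filter fun p => l ∈ uses p, q p)
    (Cost : (P → ℝ) → P → ℝ)
    (hCost : ∀ q p, Cost q p = ∑ l ∈ uses p, f l (z q l)) :
    ∃ q : P → ℝ, (∀ p, 0 ≤ q p) ∧ ∑ p, q p = γ ∧
      ∀ p, 0 < q p → ∀ p', Cost q p ≤ Cost q p' := by
  -- Beckmann potential
  set F : A → ℝ → ℝ := fun l x => ∫ t in (0:ℝ)..x, f l t with hFdef
  have hFd : ∀ l x, HasDerivAt (F l) (f l x) x := fun l x =>
    ((hfc l).integral_hasStrictDerivAt 0 x).hasDerivAt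
  have hFc : ∀ l, Continuous (F l) := fun l =>
    continuous_iff_continuousAt.mpr fun x => (hFd l x).continuousAt
  set Z : (P → ℝ) → A → ℝ :=
    fun q l => ∑ p ∈ Finset.univ.filter fun p => l ∈ uses p, q p with hZdef
  have hZc : ∀ l, Continuous fun q => Z q l := fun l =>
    continuous_finset_sum _ fun p _ => continuous_apply p
  set Φ : (P → ℝ) → ℝ := fun q => ∑ l : A, F l (Z q l) with hΦdef
  have hΦc : Continuous Φ := continuous_finset_sum _ fun l _ => (hFc l).comp (hZc l)
  set S : Set (P → ℝ) := {q | (∀ p, 0 ≤ q p) ∧ ∑ p, q p = γ} with hSdef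
  have hSne : S.Nonempty := by
    refine ⟨fun _ => γ / Fintype.card P, fun p => ?_, ?_⟩
    · positivity
    · rw [Finset.sum_const, Finset.card_univ, nsmul_eq_mul]
      field_simp
  have hScomp : IsCompact S := by
    have hsub : S ⊆ Set.pi Set.univ fun _ : P => Set.Icc (0:ℝ) γ := by
      intro q hq p _
      refine ⟨hq.1 p, ?_⟩
      calc q p = ∑ p' ∈ {p}, q p' := by simp
        _ ≤ ∑ p', q p' := Finset.sum_le_sum_of_subset_of_nonneg (Finset.subset_univ _)
            (fun i _ _ => hq.1 i)
        _ = γ := hq.2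
    have hcl : IsClosed S := by
      have h1 : IsClosed {q : P → ℝ | ∀ p, 0 ≤ q p} := by
        rw [Set.setOf_forall]
        exact isClosed_iInter fun p => isClosed_le continuous_const (continuous_apply p)
      have h2 : IsClosed {q : P → ℝ | ∑ p, q p = γ} :=
        isClosed_eq (continuous_finset_sum _ fun p _ => continuous_apply p) continuous_const
      exact h1.inter h2
    exact (isCompact_univ_pi fun _ => isCompact_Icc).of_isClosed_subset hcl hsub
  obtain ⟨q, hqS, hqmin⟩ := hScomp.exists_isMinOn hSne hΦc.continuousOn
  have hzZ : ∀ l, z q l = Z q l := fun l => hz q l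
  refine ⟨q, hqS.1, hqS.2, ?_⟩
  intro p hp p'
  by_contra hlt
  push_neg at hlt
  have hpp' : p ≠ p' := by rintro rfl; exact lt_irrefl _ hlt
  set d : A → ℝ := fun l =>
    (if l ∈ uses p' then (1:ℝ) else 0) - (if l ∈ uses p then (1:ℝ) else 0) with hddef
  set h : ℝ → ℝ := fun ε => ∑ l : A, F l (Z q l + ε * d l) with hhdef
  have hderiv : HasDerivAt h (Cost q p' - Cost q p) 0 := by
    have hd : HasDerivAt h (∑ l : A, f l (Z q l) * d l) 0 := by
      apply HasDerivAt.fun_sum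
      intro l _
      have h1 : HasDerivAt (fun ε : ℝ => Z q l + ε * d l) (d l) 0 := by
        simpa using (HasDerivAt.const_add (Z q l) ((hasDerivAt_id (0:ℝ)).mul_const (d l)))
      have h2 := (hFd l (Z q l + 0 * d l)).comp 0 h1
      simp only [zero_mul, add_zero] at h2
      exact h2
    convert hd using 1
    have e1 : ∀ p'' : P, (∑ l : A, f l (Z q l) * (if l ∈ uses p'' then (1:ℝ) else 0))
        = Cost q p'' := by
      intro p''
      rw [hCost]
      simp only [mul_ite, mul_one, mul_zero, Finset.sum_ite_mem, Finset.univ_inter]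
      exact Finset.sum_congr rfl fun l _ => by rw [hzZ]
    calc Cost q p' - Cost q p
        = (∑ l : A, f l (Z q l) * (if l ∈ uses p' then (1:ℝ) else 0))
          - ∑ l : A, f l (Z q l) * (if l ∈ uses p then (1:ℝ) else 0) := by
          rw [e1, e1]
      _ = ∑ l : A, f l (Z q l) * d l := by
          rw [← Finset.sum_sub_distrib]
          refine Finset.sum_congr rfl fun l _ => ?_
          rw [hddef, mul_sub]
  have hneg : Cost q p' - Cost q p < 0 := by linarith
  rw [hasDerivAt_iff_tendsto_slope] at hderiv
  have hev : ∀ᶠ ε in nhdsWithin 0 (Set.Ioi 0), slope h 0 ε < 0 := by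
    have := hderiv (Iio_mem_nhds hneg)
    exact nhdsWithin_mono 0 (fun x hx => ne_of_gt hx) this
  have hev2 : ∀ᶠ ε in nhdsWithin 0 (Set.Ioi 0), ε < q p :=
    nhdsWithin_le_nhds (Iio_mem_nhds hp)
  have hev3 : ∀ᶠ ε in nhdsWithin 0 (Set.Ioi 0), (0:ℝ) < ε :=
    self_mem_nhdsWithin
  obtain ⟨ε, ⟨hsl, hεq⟩, hε0⟩ := ((hev.and hev2).and hev3).exists
  -- h ε < h 0
  have hhε : h ε < h 0 := by
    rw [slope_def_field, sub_zero] at hsl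
    have := (div_lt_iff₀ hε0).mp hsl
    linarith
  -- the perturbed flow
  set q' : P → ℝ := fun r =>
    q r + ε * ((if r = p' then (1:ℝ) else 0) - (if r = p then (1:ℝ) else 0)) with hq'def
  have hq'S : q' ∈ S := by
    constructor
    · intro r
      rcases eq_or_ne r p with rfl | hrp
      · have : q' r = q r - ε := by simp [hq'def, hpp']; ring
        rw [this]; linarith
      · rcases eq_or_ne r p' with rfl | hrp'
        · have : q' r = q r + ε := by simp [hq'def, hrp]
          rw [this]; have := hqS.1 r; linarith
        · have : q' r = q r := by simp [hq'def, hrp, hrp']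
          rw [this]; exact hqS.1 r
    · simp only [hq'def]
      rw [Finset.sum_add_distrib, ← Finset.mul_sum, Finset.sum_sub_distrib,
          Finset.sum_ite_eq' Finset.univ p' (fun _ => (1:ℝ)),
          Finset.sum_ite_eq' Finset.univ p (fun _ => (1:ℝ))]
      simp [hqS.2]
  have hZq' : ∀ l, Z q' l = Z q l + ε * d l := by
    intro l
    simp only [hZdef, hq'def]
    rw [Finset.sum_add_distrib, ← Finset.mul_sum, Finset.sum_sub_distrib,
        Finset.sum_ite_eq' _ p' (fun _ => (1:ℝ)),
        Finset.sum_ite_eq' _ p (fun _ => (1:ℝ))]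
    simp [hddef, Finset.mem_filter]
  have hΦq' : Φ q' = h ε := by
    simp only [hΦdef, hhdef]
    exact Finset.sum_congr rfl fun l _ => by rw [hZq' l]
  have hΦq : Φ q = h 0 := by
    simp only [hΦdef, hhdef]
    exact Finset.sum_congr rfl fun l _ => by rw [zero_mul, add_zero]
  have hmin := hqmin hq'S
  rw [Set.mem_setOf_eq, hΦq, hΦq'] at hmin
  linarith
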